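/- Let 0 < p < 1 and τ ∈ ℕ with τ ≥ 1. Define the Markov parameters of the delay in Laguerre-domain by h_0 = (√p)^τ and h_m = (1−p)·L^{(τ)}_m(√p) for m ≥ 1, and set α = √p + 1/√p, β = √p − 1/√p. Then for every m ≥ 1, (m+1)·h_{m+1} + (m·α + τ·β)·h_m + (m−1)·h_{m−1} = 0; consequently, for every m ≥ 1 with h_m ≠ 0, τ = −((m+1)·h_{m+1} + (m−1)·h_{m−1})/(β·h_m) − m·α/β. -/

import Mathlib

/-- The polynomial factor `L_m^{(τ)}(√p)` in the Laguerre-domain delay description. -/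
noncomputable def delayLaguerrePoly (p : ℝ) (τ m : ℕ) : ℝ :=
  (-Real.sqrt p) ^ ((m : ℤ) - (τ : ℤ)) *
    ∑ n ∈ Finset.range τ,
      ((m + n).choose n : ℝ) * ((m - 1).choose (τ - n - 1) : ℝ) * (-p) ^ n

/-- The Markov parameters of the `τ`-step delay in Laguerre-domain:
`h_0 = (√p)^τ` and `h_m = (1−p)·L_m^{(τ)}(√p)` for `m ≥ 1`. -/
noncomputable def delayMarkov (p : ℝ) (τ : ℕ) (m : ℕ) : ℝ :=
  if m = 0 then Real.sqrt p ^ τ else (1 - p) * delayLaguerrePoly p τ m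


lemma rch1 (M i : ℕ) : ((i:ℝ)+1) * ((M+i+1).choose (i+1)) = ((M:ℝ)+1) * ((M+i+1).choose i) := by
  have h := Nat.choose_succ_right_eq (M+i+1) i
  have h2 : M + i + 1 - i = M + 1 := by omega
  rw [h2] at h
  have hr : (((M+i+1).choose (i+1) : ℝ)) * ((i:ℝ)+1) = (((M+i+1).choose i : ℝ)) * ((M:ℝ)+1) := by
    exact_mod_cast h
  linarith

lemma rch3 (M i : ℕ) : ((i:ℝ)+1) * ((M+i+2).choose (i+1)) = ((M:ℝ)+2) * ((M+i+2).choose i) := by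
  have h := Nat.choose_succ_right_eq (M+i+2) i
  have h2 : M + i + 2 - i = M + 2 := by omega
  rw [h2] at h
  have hr : (((M+i+2).choose (i+1) : ℝ)) * ((i:ℝ)+1) = (((M+i+2).choose i : ℝ)) * ((M:ℝ)+2) := by
    exact_mod_cast h
  linarith

lemma rch5 (M q : ℕ) : ((q:ℝ)+1) * (M.choose (q+1)) = ((M:ℝ)-q) * (M.choose q) := by
  rcases le_or_gt q M with h | h
  · have hh := Nat.choose_succ_right_eq M q
    have hr : ((M.choose (q+1) : ℝ)) * ((q:ℝ)+1) = ((M.choose q : ℝ)) * (((M - q : ℕ)):ℝ) := by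
      exact_mod_cast hh
    rw [Nat.cast_sub h] at hr
    linarith
  · rw [Nat.choose_eq_zero_of_lt h, Nat.choose_eq_zero_of_lt (by omega)]
    simp

lemma rch6 (M q : ℕ) : (M:ℝ) * ((M-1).choose q) = ((M:ℝ)-q) * (M.choose q) := by
  rcases M with _ | K
  · rcases q with _ | q <;> simp
  · simp only [Nat.add_sub_cancel]
    rcases le_or_gt q (K+1) with h | h
    · have hh := Nat.choose_mul_succ_eq K q
      have hr : ((K.choose q : ℝ)) * ((K:ℝ)+1) = (((K+1).choose q : ℝ)) * (((K + 1 - q : ℕ)):ℝ) := by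
        exact_mod_cast hh
      push_cast [Nat.cast_sub h] at hr ⊢
      linarith
    · rw [Nat.choose_eq_zero_of_lt h, Nat.choose_eq_zero_of_lt (by omega)]
      simp

/-- Pointwise coefficient identity. -/
lemma pointwise (M i q : ℕ) :
    (((i:ℝ)+(q:ℝ)+2) - ((M:ℝ)+1)) * ((M+i+2).choose (i+1)) * (M.choose q)
      + (M:ℝ) * ((M+i+1).choose (i+1)) * ((M-1).choose q)
    = ((M:ℝ)+2) * ((M+i+2).choose i) * ((M+1).choose (q+1))
      - (((M:ℝ)+1)+((i:ℝ)+(q:ℝ)+2)) * ((M+i+1).choose i) * (M.choose (q+1)) := by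
  set A : ℝ := ((M+i+1).choose i : ℝ) with hA
  set A1 : ℝ := ((M+i+1).choose (i+1) : ℝ) with hA1
  set A2 : ℝ := ((M+i+2).choose (i+1) : ℝ) with hA2
  set A3 : ℝ := ((M+i+2).choose i : ℝ) with hA3
  set B0 : ℝ := (M.choose q : ℝ) with hB0
  set B1 : ℝ := (M.choose (q+1) : ℝ) with hB1
  set B2 : ℝ := ((M+1).choose (q+1) : ℝ) with hB2
  set Bm : ℝ := ((M-1).choose q : ℝ) with hBm
  have h1 : ((i:ℝ)+1) * A1 = ((M:ℝ)+1) * A := rch1 M i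
  have h3 : ((i:ℝ)+1) * A2 = ((M:ℝ)+2) * A3 := rch3 M i
  have h5 : ((q:ℝ)+1) * B1 = ((M:ℝ)-q) * B0 := rch5 M q
  have h6 : (M:ℝ) * Bm = ((M:ℝ)-q) * B0 := rch6 M q
  have h2 : A2 = A + A1 := by
    rw [hA2, hA, hA1, show M+i+2 = (M+i+1)+1 from rfl, Nat.choose_succ_succ]
    push_cast; ring
  have h4 : B2 = B0 + B1 := by
    rw [hB2, hB0, hB1, Nat.choose_succ_succ]
    push_cast; ring
  have e1 : ((i:ℝ)+1) * A2 = ((M:ℝ)+(i:ℝ)+2) * A := by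
    rw [h2]; linear_combination h1
  have hne : ((i:ℝ)+1) ≠ 0 := by positivity
  apply mul_left_cancel₀ hne
  have EL : ((i:ℝ)+1) * ((((i:ℝ)+(q:ℝ)+2) - ((M:ℝ)+1)) * A2 * B0 + (M:ℝ) * A1 * Bm)
      = (((i:ℝ)+1) * ((i:ℝ)+(q:ℝ)+2)) * (A * B0) := by
    linear_combination (((i:ℝ)+(q:ℝ)+1-(M:ℝ)) * B0) * e1 + ((M:ℝ) * Bm) * h1 + (((M:ℝ)+1) * A) * h6
  have ER : ((i:ℝ)+1) * (((M:ℝ)+2) * A3 * B2 - (((M:ℝ)+1)+((i:ℝ)+(q:ℝ)+2)) * A * B1)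
      = (((i:ℝ)+1) * ((i:ℝ)+(q:ℝ)+2)) * (A * B0) := by
    linear_combination (-((i:ℝ)+1) * B2) * h3 + (((i:ℝ)+1) * B2) * e1
      + (((M:ℝ)+(i:ℝ)+2) * ((i:ℝ)+1) * A) * h4 - (((i:ℝ)+1) * A) * h5
  rw [mul_comm]
  calc _ = ((i:ℝ)+1) * ((((i:ℝ)+(q:ℝ)+2) - ((M:ℝ)+1)) * A2 * B0 + (M:ℝ) * A1 * Bm) := by ring
  _ = (((i:ℝ)+1) * ((i:ℝ)+(q:ℝ)+2)) * (A * B0) := EL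
  _ = ((i:ℝ)+1) * (((M:ℝ)+2) * A3 * B2 - (((M:ℝ)+1)+((i:ℝ)+(q:ℝ)+2)) * A * B1) := ER.symm
  _ = _ := by ring

noncomputable def uf (M τ n : ℕ) : ℝ :=
  ((M:ℝ)+2) * ((M+2+n).choose n) * ((M+1).choose (τ-n-1))
    - ((M:ℝ)+1+(τ:ℝ)) * ((M+1+n).choose n) * (M.choose (τ-n-1))

noncomputable def vf (M τ n : ℕ) : ℝ :=
  ((τ:ℝ)-((M:ℝ)+1)) * ((M+1+n).choose n) * (M.choose (τ-n-1))
    + (M:ℝ) * ((M+n).choose n) * ((M-1).choose (τ-n-1))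

lemma vf_zero (M T : ℕ) : vf M (T+1) 0 = 0 := by
  simp only [vf, Nat.add_zero, Nat.choose_zero_right, Nat.cast_one]
  have h6 := rch6 M T
  have : T + 1 - 0 - 1 = T := by omega
  rw [this]
  push_cast
  linear_combination h6

lemma uf_top (M T : ℕ) : uf M (T+1) T = 0 := by
  simp only [uf]
  have h1 : T + 1 - T - 1 = 0 := by omega
  rw [h1]
  have hh := Nat.choose_mul_succ_eq (M+T+1) T
  have h2 : M + T + 1 + 1 - T = M + 2 := by omega
  rw [h2] at hh
  have hr : (((M+T+1).choose T : ℝ)) * ((M:ℝ)+(T:ℝ)+2) = (((M+T+2).choose T : ℝ)) * ((M:ℝ)+2) := by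
    exact_mod_cast hh
  have e1 : M+2+T = M+T+2 := by omega
  have e2 : M+1+T = M+T+1 := by omega
  rw [e1, e2]
  push_cast
  simp only [Nat.choose_zero_right]
  push_cast
  linear_combination -hr

lemma vf_succ_eq_uf (M T i : ℕ) (hi : i < T) : vf M (T+1) (i+1) = uf M (T+1) i := by
  obtain ⟨q, rfl⟩ : ∃ q, T = i + 1 + q := ⟨T - i - 1, by omega⟩
  simp only [vf, uf]
  have e1 : i + 1 + q + 1 - (i+1) - 1 = q := by omega
  have e2 : i + 1 + q + 1 - i - 1 = q + 1 := by omega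
  rw [e1, e2]
  have e3 : M + 1 + (i+1) = M + i + 2 := by omega
  have e4 : M + (i+1) = M + i + 1 := by omega
  have e5 : M + 2 + i = M + i + 2 := by omega
  have e6 : M + 1 + i = M + i + 1 := by omega
  rw [e3, e4, e5, e6]
  have := pointwise M i q
  push_cast
  push_cast at this
  linear_combination this

lemma sum_identity (p : ℝ) (τ : ℕ) (hτ : 1 ≤ τ) (M : ℕ) :
    ((M:ℝ)+2) * p * (∑ n ∈ Finset.range τ, ((M+2+n).choose n : ℝ) * ((M+1).choose (τ-n-1) : ℝ) * (-p)^n)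
    - (((M:ℝ)+1)*(p+1) + (τ:ℝ)*(p-1)) * (∑ n ∈ Finset.range τ, ((M+1+n).choose n : ℝ) * ((M).choose (τ-n-1) : ℝ) * (-p)^n)
    + (M:ℝ) * (∑ n ∈ Finset.range τ, ((M+n).choose n : ℝ) * ((M-1).choose (τ-n-1) : ℝ) * (-p)^n) = 0 := by
  obtain ⟨T, rfl⟩ : ∃ T, τ = T + 1 := ⟨τ - 1, by omega⟩
  have main : (∑ n ∈ Finset.range (T+1), vf M (T+1) n * (-p)^n)
      = ∑ n ∈ Finset.range (T+1), uf M (T+1) n * (-p)^(n+1) := by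
    rw [Finset.sum_range_succ' (fun n => vf M (T+1) n * (-p)^n) T]
    rw [Finset.sum_range_succ]
    rw [vf_zero, uf_top]
    simp only [zero_mul, add_zero, pow_zero, mul_one]
    exact Finset.sum_congr rfl fun i hi => by
      rw [vf_succ_eq_uf M T i (Finset.mem_range.mp hi)]
  calc ((M:ℝ)+2) * p * (∑ n ∈ Finset.range (T+1), ((M+2+n).choose n : ℝ) * ((M+1).choose (T+1-n-1) : ℝ) * (-p)^n)
    - (((M:ℝ)+1)*(p+1) + ((T+1:ℕ):ℝ)*(p-1)) * (∑ n ∈ Finset.range (T+1), ((M+1+n).choose n : ℝ) * ((M).choose (T+1-n-1) : ℝ) * (-p)^n)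
    + (M:ℝ) * (∑ n ∈ Finset.range (T+1), ((M+n).choose n : ℝ) * ((M-1).choose (T+1-n-1) : ℝ) * (-p)^n)
      = ∑ n ∈ Finset.range (T+1), (vf M (T+1) n * (-p)^n - uf M (T+1) n * (-p)^(n+1)) := by
        rw [Finset.mul_sum, Finset.mul_sum, Finset.mul_sum, ← Finset.sum_sub_distrib,
          ← Finset.sum_add_distrib]
        exact Finset.sum_congr rfl fun n _ => by
          simp only [vf, uf, pow_succ]
          push_cast
          ring
  _ = 0 := by
        rw [Finset.sum_sub_distrib, main, sub_self]

lemma L_rec (p : ℝ) (hp0 : 0 < p) (τ M : ℕ) (hτ : 1 ≤ τ) :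
    ((M:ℝ)+2) * delayLaguerrePoly p τ (M+2)
    + (((M:ℝ)+1) * (Real.sqrt p + 1/Real.sqrt p) + (τ:ℝ) * (Real.sqrt p - 1/Real.sqrt p))
        * delayLaguerrePoly p τ (M+1)
    + (M:ℝ) * delayLaguerrePoly p τ M = 0 := by
  set s := Real.sqrt p with hsdef
  have hs : 0 < s := Real.sqrt_pos.mpr hp0
  have hss : s * s = p := Real.mul_self_sqrt hp0.le
  have hns : (-s) ≠ 0 := neg_ne_zero.mpr hs.ne'
  simp only [delayLaguerrePoly, show M+2-1 = M+1 from rfl, show M+1-1 = M from rfl]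
  have hc2 : ((M+2:ℕ):ℤ) - (τ:ℤ) = ((M:ℤ)-(τ:ℤ))+2 := by push_cast; ring
  have hc1 : ((M+1:ℕ):ℤ) - (τ:ℤ) = ((M:ℤ)-(τ:ℤ))+1 := by push_cast; ring
  rw [hc2, hc1, zpow_add₀ hns, zpow_add₀ hns, zpow_one]
  have h2 : (-s)^(2:ℤ) = p := by
    rw [show (2:ℤ) = ((2:ℕ):ℤ) from rfl, zpow_natCast, neg_sq, sq, hss]
  rw [h2]
  set E : ℝ := (-s)^((M:ℤ)-(τ:ℤ)) with hE
  set S2 : ℝ := ∑ n ∈ Finset.range τ, ((M+2+n).choose n : ℝ) * ((M+1).choose (τ-n-1) : ℝ) * (-p)^n with hS2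
  set S1 : ℝ := ∑ n ∈ Finset.range τ, ((M+1+n).choose n : ℝ) * ((M).choose (τ-n-1) : ℝ) * (-p)^n with hS1
  set S0 : ℝ := ∑ n ∈ Finset.range τ, ((M+n).choose n : ℝ) * ((M-1).choose (τ-n-1) : ℝ) * (-p)^n with hS0
  have SI := sum_identity p τ hτ M
  rw [← hS2, ← hS1, ← hS0] at SI
  have hsa : (s + 1/s) * s = p + 1 := by field_simp; linear_combination hss
  have hsb : (s - 1/s) * s = p - 1 := by field_simp; linear_combination hss
  linear_combination E * SI - ((M:ℝ)+1) * E * S1 * hsa - (τ:ℝ) * E * S1 * hsb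

/-- Three-term recurrence of the delay Markov parameters and the resulting
closed-form expression of the delay `τ`. -/
theorem delay_markov_recurrence (p : ℝ) (hp0 : 0 < p) (hp1 : p < 1)
    (τ : ℕ) (hτ : 1 ≤ τ) (α β : ℝ)
    (hα : α = Real.sqrt p + 1 / Real.sqrt p) (hβ : β = Real.sqrt p - 1 / Real.sqrt p) :
    ∀ m : ℕ, 1 ≤ m →
      ((m : ℝ) + 1) * delayMarkov p τ (m + 1) +
          ((m : ℝ) * α + (τ : ℝ) * β) * delayMarkov p τ m +
          ((m : ℝ) - 1) * delayMarkov p τ (m - 1) = 0 ∧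
      (delayMarkov p τ m ≠ 0 →
        (τ : ℝ) = -(((m : ℝ) + 1) * delayMarkov p τ (m + 1) +
              ((m : ℝ) - 1) * delayMarkov p τ (m - 1)) / (β * delayMarkov p τ m) -
            (m : ℝ) * α / β) := by
  intro m hm
  obtain ⟨M, rfl⟩ : ∃ M, m = M + 1 := ⟨m - 1, by omega⟩
  have key : ∀ k : ℕ, (k:ℝ) * delayMarkov p τ k = (k:ℝ) * ((1-p) * delayLaguerrePoly p τ k) := by
    intro k
    cases k with
    | zero => simp
    | succ K => simp [delayMarkov]
  have hrec := L_rec p hp0 τ M hτ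
  have hM := key M
  have part1 :
      (((M+1:ℕ):ℝ) + 1) * delayMarkov p τ (M + 1 + 1) +
        (((M+1:ℕ):ℝ) * α + (τ : ℝ) * β) * delayMarkov p τ (M + 1) +
        (((M+1:ℕ):ℝ) - 1) * delayMarkov p τ (M + 1 - 1) = 0 := by
    subst hα hβ
    have h2 : delayMarkov p τ (M+1+1) = (1-p) * delayLaguerrePoly p τ (M+2) := by
      simp [delayMarkov]
    have h1 : delayMarkov p τ (M+1) = (1-p) * delayLaguerrePoly p τ (M+1) := by
      simp [delayMarkov]
    have h0 : M + 1 - 1 = M := rfl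
    rw [h2, h1, h0]
    push_cast
    linear_combination (1-p) * hrec + hM
  refine ⟨part1, fun hne => ?_⟩
  have hβne : β ≠ 0 := by
    rw [hβ]
    have hs : 0 < Real.sqrt p := Real.sqrt_pos.mpr hp0
    have hss : Real.sqrt p * Real.sqrt p = p := Real.mul_self_sqrt hp0.le
    intro h
    have h' : Real.sqrt p * Real.sqrt p = 1 := by
      field_simp at h
      nlinarith [h]
    linarith [hss, h']
  have h1 : -((((M+1:ℕ):ℝ) + 1) * delayMarkov p τ (M + 1 + 1) +
        (((M+1:ℕ):ℝ) - 1) * delayMarkov p τ (M + 1 - 1))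
      = (((M+1:ℕ):ℝ) * α + (τ : ℝ) * β) * delayMarkov p τ (M + 1) := by
    linear_combination -part1
  rw [h1, mul_comm β (delayMarkov p τ (M + 1)),
    mul_comm ((((M+1:ℕ):ℝ)) * α + (τ : ℝ) * β) (delayMarkov p τ (M + 1)),
    mul_div_mul_left _ _ hne]
  field_simp
  ring
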